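/- Let C be an Hadamard code of length 4n and let s ∈ K(C) with s ∉ {0, u}. Then the projection of C onto the support of s is an Hadamard code of length 2n: it consists of 2n vectors and their complements, pairwise at Hamming distance n. -/

import Mathlib

open Finset


/-- The all-ones vector. -/
def allOnes (m : ℕ) : Fin m → ZMod 2 := fun _ => 1

lemma zmod2cases : ∀ a : ZMod 2, a = 0 ∨ a = 1 := by decide

lemma equidistant_card_le (L d : ℕ) (hL : 0 < L) (hLd : L = 2*d)
    (D : Finset (Fin L → ZMod 2))
    (hD : ∀ x ∈ D, ∀ y ∈ D, x ≠ y → hammingDist x y = d) : D.card ≤ L := by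
  classical
  set c : ℝ := (Real.sqrt L)⁻¹ with hc
  set g : (Fin L → ZMod 2) → EuclideanSpace ℝ (Fin L) :=
    fun v => WithLp.toLp 2 (fun i => c * (if v i = 0 then 1 else -1)) with hg
  have hsum : ∀ v w : Fin L → ZMod 2,
      (inner ℝ (g v) (g w) : ℝ) = c^2 * ((L : ℝ) - 2 * hammingDist v w) := by
    intro v w
    have hterm : ∀ a b : ZMod 2,
        ((if a = 0 then (1:ℝ) else -1) * (if b = 0 then 1 else -1))
          = 1 - 2 * (if a ≠ b then 1 else 0) := by
      intro a b
      rcases zmod2cases a with ha | ha <;> rcases zmod2cases b with hb | hb <;>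
        subst ha <;> subst hb <;> norm_num
    have h1 : (inner ℝ (g v) (g w) : ℝ) = ∑ i, (c * (if v i = 0 then 1 else -1)) *
        (c * (if w i = 0 then 1 else -1)) := by
      simp [PiLp.inner_apply, RCLike.inner_apply, hg]
      exact Finset.sum_congr rfl (fun i _ => by split_ifs <;> ring)
    rw [h1]
    have h2 : ∀ i : Fin L, (c * (if v i = 0 then (1:ℝ) else -1)) *
        (c * (if w i = 0 then 1 else -1)) = c^2 * (1 - 2 * (if v i ≠ w i then 1 else 0)) := by
      intro i; rw [← hterm]; ring
    rw [Finset.sum_congr rfl (fun i _ => h2 i), ← Finset.mul_sum]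
    congr 1
    rw [Finset.sum_sub_distrib, Finset.sum_const, ← Finset.mul_sum, Finset.sum_boole]
    have hh : hammingDist v w = (univ.filter fun i => v i ≠ w i).card := rfl
    simp [hh]
  have hfin : D.card ≤ Module.finrank ℝ (EuclideanSpace ℝ (Fin L)) := by
    have horth : Orthonormal ℝ (fun x : ↥D => g x.val) := by
      rw [orthonormal_iff_ite]
      intro i j
      rw [hsum]
      by_cases h : i = j
      · subst h
        simp only [if_pos rfl, hammingDist_self]
        rw [hc, ← Real.sqrt_inv, Real.sq_sqrt (by positivity)]
        have : (0:ℝ) < L := by exact_mod_cast hL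
        field_simp
        simp
      · have hne : (i : Fin L → ZMod 2) ≠ j := fun hh => h (Subtype.ext hh)
        rw [hD _ i.2 _ j.2 hne, if_neg h]
        have : (L : ℝ) = 2 * d := by exact_mod_cast hLd
        rw [this]; ring
    rw [← Fintype.card_coe]
    exact horth.linearIndependent.fintype_card_le_finrank
  rwa [finrank_euclideanSpace_fin] at hfin

lemma dist_compl (m : ℕ) (v w : Fin m → ZMod 2) :
    hammingDist v w + hammingDist v (w + allOnes m) = m := by
  classical
  have hkey : ∀ a b : ZMod 2, (¬ a ≠ b) ↔ (a ≠ b + 1) := by decide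
  have hfe : (univ.filter fun i => ¬ v i ≠ w i)
      = (univ.filter fun i => v i ≠ (w + allOnes m) i) := by
    apply Finset.filter_congr
    intro i _
    simp only [allOnes, Pi.add_apply]
    exact_mod_cast hkey (v i) (w i)
  have h2 := Finset.card_filter_add_card_filter_not (s := (univ : Finset (Fin m)))
    (p := fun i => v i ≠ w i)
  rw [hfe] at h2
  simpa [hammingDist] using h2

lemma hdist_add_right (m : ℕ) (v w x : Fin m → ZMod 2) :
    hammingDist (v + x) (w + x) = hammingDist v w := by
  classical
  simp only [hammingDist]
  apply Finset.card_bij (fun i _ => i) <;> simp [add_left_injective]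

lemma uu_zero (m : ℕ) : allOnes m + allOnes m = 0 := by
  funext i; simp [allOnes]; decide

lemma self_add_self (m : ℕ) (v : Fin m → ZMod 2) : v + v = 0 := by
  funext i; simp [CharTwo.add_self_eq_zero]

lemma compl_closed (n : ℕ) (hn : 0 < n) (C : Finset (Fin (4*n) → ZMod 2))
    (hcard : C.card = 8*n)
    (hdist : ∀ x ∈ C, ∀ y ∈ C, x ≠ y → x ≠ y + allOnes (4*n) → hammingDist x y = 2*n) :
    ∀ x ∈ C, x + allOnes (4*n) ∈ C := by
  classical
  intro x hx
  by_contra hxu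
  set u : Fin (4*n) → ZMod 2 := allOnes (4*n) with hu
  set C' := C.image (fun y => y + x) with hC'
  have hC'card : C'.card = 8*n := by
    rw [hC', Finset.card_image_of_injective _ (add_left_injective x), hcard]
  have hC'dist : ∀ a ∈ C', ∀ b ∈ C', a ≠ b → a ≠ b + u → hammingDist a b = 2*n := by
    intro a ha b hb hab habu
    rw [hC', Finset.mem_image] at ha hb
    obtain ⟨y1, hy1, rfl⟩ := ha
    obtain ⟨y2, hy2, rfl⟩ := hb
    rw [hdist_add_right]
    apply hdist _ hy1 _ hy2
    · intro h; exact hab (by rw [h])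
    · intro h; apply habu; rw [h]; ring
  have h0C' : (0 : Fin (4*n) → ZMod 2) ∈ C' := by
    rw [hC', Finset.mem_image]
    exact ⟨x, hx, self_add_self _ x⟩
  have huC' : u ∉ C' := by
    intro h
    rw [hC', Finset.mem_image] at h
    obtain ⟨y, hy, hyx⟩ := h
    apply hxu
    have hy' : x + u = y := by
      rw [← hyx, add_comm y x, ← add_assoc, self_add_self, zero_add]
    rw [hy']; exact hy
  -- representatives
  have hi0 : (0 : ℕ) < 4*n := by omega
  set i0 : Fin (4*n) := ⟨0, hi0⟩ with hi0def
  set rep : (Fin (4*n) → ZMod 2) → (Fin (4*n) → ZMod 2) :=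
    fun v => if v i0 = 0 then v else v + u with hrep
  have hrep_or : ∀ v, rep v = v ∨ rep v = v + u := by
    intro v; rw [hrep]; dsimp only; split_ifs
    · exact Or.inl rfl
    · exact Or.inr rfl
  have hrep_class : ∀ v, rep (v + u) = rep v := by
    intro v
    rw [hrep]; dsimp only
    rcases zmod2cases (v i0) with h | h
    · rw [if_pos h]
      have : (v + u) i0 ≠ 0 := by simp [h, hu, allOnes]
      rw [if_neg this, add_assoc, uu_zero, add_zero]
    · have h1 : v i0 ≠ 0 := by rw [h]; decide
      rw [if_neg h1]
      have : (v + u) i0 = 0 := by simp [h, hu, allOnes]; decide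
      rw [if_pos this]
  set D := C'.image rep with hD
  have hDdist : ∀ a ∈ D, ∀ b ∈ D, a ≠ b → hammingDist a b = 2*n := by
    intro a ha b hb hab
    rw [hD, Finset.mem_image] at ha hb
    obtain ⟨v, hv, rfl⟩ := ha
    obtain ⟨w, hw, rfl⟩ := hb
    have hvw : v ≠ w := by rintro rfl; exact hab rfl
    have hvwu : v ≠ w + u := by
      rintro rfl; exact hab (hrep_class w)
    have hbase : hammingDist v w = 2*n := hC'dist _ hv _ hw hvw hvwu
    have hc1 : hammingDist v (w + u) = 2*n := by
      have := dist_compl (4*n) v w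
      rw [hbase, ← hu] at this; omega
    have hc2 : hammingDist (v + u) w = 2*n := by
      rw [hammingDist_comm]
      have := dist_compl (4*n) w v
      rw [hammingDist_comm w v, hbase, ← hu] at this; omega
    have hc3 : hammingDist (v + u) (w + u) = 2*n := by
      rw [hdist_add_right]; exact hbase
    rcases hrep_or v with h1 | h1 <;> rcases hrep_or w with h2 | h2 <;>
      rw [h1, h2] <;> assumption
  have hDcard : D.card ≤ 4*n := by
    apply equidistant_card_le (4*n) (2*n) (by omega) (by ring) D hDdist
  have hsub : C' ⊆ D.biUnion (fun a => {a, a + u}) := by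
    intro v hv
    rw [Finset.mem_biUnion]
    refine ⟨rep v, Finset.mem_image_of_mem _ hv, ?_⟩
    rcases hrep_or v with h | h
    · rw [h]; exact Finset.mem_insert_self _ _
    · refine Finset.mem_insert_of_mem ?_
      rw [Finset.mem_singleton, h, add_assoc, uu_zero, add_zero]
  have hbU : (D.biUnion (fun a => {a, a + u})).card ≤ 8*n := by
    calc (D.biUnion (fun a => {a, a + u})).card
        ≤ ∑ a ∈ D, ({a, a + u} : Finset _).card := Finset.card_biUnion_le
      _ ≤ ∑ _a ∈ D, 2 := by
          apply Finset.sum_le_sum; intro a _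
          apply le_trans (Finset.card_insert_le _ _); simp
      _ = 2 * D.card := by rw [Finset.sum_const]; ring
      _ ≤ 8*n := by omega
  have heq : C' = D.biUnion (fun a => {a, a + u}) := by
    apply Finset.eq_of_subset_of_card_le hsub
    rw [hC'card] at *
    omega
  have h0D : (0 : Fin (4*n) → ZMod 2) ∈ D := by
    rw [hD, Finset.mem_image]
    refine ⟨0, h0C', ?_⟩
    rw [hrep]; simp
  have : u ∈ C' := by
    rw [heq, Finset.mem_biUnion]
    exact ⟨0, h0D, by simp⟩
  exact huC' this

lemma znne : ∀ a b : ZMod 2, a ≠ b → a = b + 1 := by decide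

lemma sflip : ∀ a b c : ZMod 2, c ≠ 0 → ((a + c ≠ b) ↔ ¬(a ≠ b)) := by decide

lemma card_filter_subtype {m : ℕ} (p : Fin m → Prop) [DecidablePred p]
    (Q : Fin m → Prop) [DecidablePred Q] :
    (univ.filter fun j : {i : Fin m // p i} => Q j.1).card
      = ((univ.filter p).filter fun i => Q i).card := by
  rw [Finset.filter_filter]
  apply Finset.card_bij (fun j _ => j.1)
  · intro a ha; simp only [Finset.mem_filter, Finset.mem_univ, true_and] at ha ⊢
    exact ⟨a.2, ha⟩
  · intro a _ b _ h; exact Subtype.ext h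
  · intro b hb; simp only [Finset.mem_filter, Finset.mem_univ, true_and] at hb
    exact ⟨⟨b, hb.1⟩, by simp [hb.2], rfl⟩

lemma split_card {m : ℕ} (p A : Fin m → Prop) [DecidablePred p] [DecidablePred A] :
    (univ.filter A).card = ((univ.filter p).filter A).card
      + ((univ.filter fun i => ¬ p i).filter A).card := by
  rw [Finset.filter_filter, Finset.filter_filter]
  have h := Finset.card_filter_add_card_filter_not (s := univ.filter A) (p := p)
  rw [Finset.filter_filter, Finset.filter_filter] at h
  rw [← h]
  congr 1
  · congr 1; apply Finset.filter_congr; intro i _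
    constructor <;> exact fun h => ⟨h.2, h.1⟩
  · congr 1; apply Finset.filter_congr; intro i _
    constructor <;> exact fun h => ⟨h.2, h.1⟩


/-- Let `C` be an Hadamard code of length `4n` and `s ∈ K(C)`, `s ∉ {0, u}`.
Then the projection of `C` onto the support of `s` is an Hadamard code of length `2n`:
it consists of `2n` vectors and their complements, pairwise at Hamming distance `n`. -/
theorem stmt_10 (n : ℕ) (hn : 0 < n) (C : Finset (Fin (4*n) → ZMod 2))
    (h0 : (0 : Fin (4*n) → ZMod 2) ∈ C) (hu : allOnes (4*n) ∈ C)
    (hcard : C.card = 8*n)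
    (hdist : ∀ x ∈ C, ∀ y ∈ C, x ≠ y → x ≠ y + allOnes (4*n) → hammingDist x y = 2*n)
    (s : Fin (4*n) → ZMod 2)
    (hs : C.image (fun v => v + s) = C) (hs0 : s ≠ 0) (hsu : s ≠ allOnes (4*n))
    (P : Finset ({i : Fin (4*n) // s i ≠ 0} → ZMod 2))
    (hP : P = C.image (fun v => fun j : {i : Fin (4*n) // s i ≠ 0} => v j.val)) :
    P.card = 4*n ∧
    (∀ x ∈ P, x + (fun _ => 1) ∈ P) ∧
    (∀ x ∈ P, ∀ y ∈ P, x ≠ y → x ≠ y + (fun _ => (1 : ZMod 2)) → hammingDist x y = n) := by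
  classical
  set π : (Fin (4*n) → ZMod 2) → ({i : Fin (4*n) // s i ≠ 0} → ZMod 2) :=
    fun v => fun j => v j.1 with hπ
  set u : Fin (4*n) → ZMod 2 := allOnes (4*n) with hudef
  -- closures
  have scl : ∀ v ∈ C, v + s ∈ C := by
    intro v hv
    rw [← hs]
    exact Finset.mem_image_of_mem _ hv
  have ucl : ∀ v ∈ C, v + u ∈ C := compl_closed n hn C hcard hdist
  -- weight of s
  have hsC : s ∈ C := by have := scl 0 h0; rwa [zero_add] at this
  have hwt : hammingDist s 0 = 2*n := by
    apply hdist _ hsC _ h0 hs0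
    rwa [zero_add]
  -- T : support of s
  set T : Finset (Fin (4*n)) := univ.filter (fun i => s i ≠ 0) with hT
  set Tc : Finset (Fin (4*n)) := univ.filter (fun i => ¬ s i ≠ 0) with hTc
  have hTcard : T.card = 2*n := by
    rw [← hwt]
    have h' : hammingDist s 0
        = #(univ.filter fun i => s i ≠ (0 : Fin (4*n) → ZMod 2) i) := rfl
    rw [h', hT]
    congr 1
  have hTotal : T.card + Tc.card = 4*n := by
    rw [hT, hTc]
    have h := Finset.card_filter_add_card_filter_not
      (s := (univ : Finset (Fin (4*n)))) (p := fun i => s i ≠ 0)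
    simpa using h
  have hTccard : Tc.card = 2*n := by omega
  -- projection interactions
  have hπs : ∀ v, π (v + s) = π v + (fun _ => 1) := by
    intro v
    funext j
    have hj : s j.1 = 1 := by
      rcases zmod2cases (s j.1) with h | h
      · exact absurd h j.2
      · exact h
    show (v + s) j.1 = π v j + 1
    rw [Pi.add_apply, hj]
  have hπu : ∀ v, π (v + u) = π v + (fun _ => 1) := by
    intro v
    funext j
    show (v + u) j.1 = π v j + 1
    rw [Pi.add_apply]; rfl
  have hadd11 : ∀ z : {i : Fin (4*n) // s i ≠ 0} → ZMod 2, z + (fun _ => 1) + (fun _ => 1) = z := by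
    intro z
    funext j
    show z j + 1 + 1 = z j
    rcases zmod2cases (z j) with h | h <;> rw [h] <;> decide
  have hπus : ∀ v, π (v + (u + s)) = π v := by
    intro v
    rw [← add_assoc, hπs, hπu, hadd11]
  -- distance splitting
  have hπdist : ∀ v w, hammingDist (π v) (π w) = (T.filter fun i => v i ≠ w i).card := by
    intro v w
    have : hammingDist (π v) (π w)
        = (univ.filter fun j : {i : Fin (4*n) // s i ≠ 0} => v j.1 ≠ w j.1).card := rfl
    rw [this, card_filter_subtype (fun i => s i ≠ 0) (fun i => v i ≠ w i)]
  have hsplit : ∀ v w : Fin (4*n) → ZMod 2, hammingDist v w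
      = (T.filter fun i => v i ≠ w i).card + (Tc.filter fun i => v i ≠ w i).card := by
    intro v w
    have : hammingDist v w = (univ.filter fun i => v i ≠ w i).card := rfl
    rw [this, split_card (fun i => s i ≠ 0) (fun i => v i ≠ w i)]
  have hflip : ∀ v w : Fin (4*n) → ZMod 2,
      (T.filter fun i => (v + s) i ≠ w i).card + (T.filter fun i => v i ≠ w i).card = 2*n := by
    intro v w
    have h1 : (T.filter fun i => (v + s) i ≠ w i) = (T.filter fun i => ¬ v i ≠ w i) := by
      apply Finset.filter_congr
      intro i hi
      rw [hT, Finset.mem_filter] at hi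
      rw [Pi.add_apply]
      exact sflip (v i) (w i) (s i) hi.2
    rw [h1, ← hTcard, add_comm]
    exact Finset.card_filter_add_card_filter_not (p := fun i => v i ≠ w i)
  have hNc : ∀ v w : Fin (4*n) → ZMod 2,
      (Tc.filter fun i => (v + s) i ≠ w i) = (Tc.filter fun i => v i ≠ w i) := by
    intro v w
    apply Finset.filter_congr
    intro i hi
    rw [hTc, Finset.mem_filter] at hi
    have hsz : s i = 0 := not_not.mp hi.2
    rw [Pi.add_apply, hsz, add_zero]
  -- σ is nonempty
  have hσne : Nonempty {i : Fin (4*n) // s i ≠ 0} := by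
    have : 0 < T.card := by omega
    obtain ⟨i, hi⟩ := Finset.card_pos.mp this
    rw [hT, Finset.mem_filter] at hi
    exact ⟨⟨i, hi.2⟩⟩
  have hone_ne : ∀ z : {i : Fin (4*n) // s i ≠ 0} → ZMod 2, z ≠ z + (fun _ => 1) := by
    intro z h
    obtain ⟨j⟩ := hσne
    have h2 : z j = z j + 1 := congrFun h j
    rcases zmod2cases (z j) with hz | hz <;> rw [hz] at h2 <;> exact absurd h2 (by decide)
  refine ⟨?_, ?_, ?_⟩
  · -- cardinality
    have hfib : ∀ x ∈ P, (C.filter fun v => π v = x).card = 2 := by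
      intro x hx
      rw [hP, Finset.mem_image] at hx
      obtain ⟨v, hv, rfl⟩ := hx
      set v' := v + (u + s) with hv'
      have hv'C : v' ∈ C := by
        rw [hv', ← add_assoc]
        exact scl _ (ucl _ hv)
      have hvv' : v ≠ v' := by
        intro h
        rw [hv'] at h
        have huszero : u + s = 0 := by
          have h0' : v + 0 = v + (u + s) := by rw [add_zero]; exact h
          exact (add_left_cancel h0').symm
        have hsequ : s = u := by
          have h2 : u + (u + s) = u + 0 := by rw [huszero]
          rw [← add_assoc, uu_zero, zero_add, add_zero] at h2
          exact h2
        exact hsu hsequ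
      have hsubfib : (C.filter fun w => π w = π v) ⊆ {v, v'} := by
        intro w hw
        rw [Finset.mem_filter] at hw
        obtain ⟨hwC, hπw⟩ := hw
        by_cases hwv : w = v
        · simp [hwv]
        have hwvu : w ≠ v + u := by
          intro h
          rw [h, hπu] at hπw
          exact hone_ne (π v) hπw.symm
        have hd : hammingDist w v = 2*n := hdist _ hwC _ hv hwv hwvu
        have ha : (T.filter fun i => w i ≠ v i).card = 0 := by
          rw [← hπdist, hπw, hammingDist_self]
        have hb : (Tc.filter fun i => w i ≠ v i).card = 2*n := by
          have := hsplit w v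
          omega
        have hTcfull : (Tc.filter fun i => w i ≠ v i) = Tc := by
          apply Finset.eq_of_subset_of_card_le (Finset.filter_subset _ _)
          rw [hb, hTccard]
        have hTempty : ∀ i ∈ T, w i = v i := by
          intro i hi
          have : (T.filter fun i => w i ≠ v i) = ∅ := Finset.card_eq_zero.mp ha
          by_contra hne
          have : i ∈ (T.filter fun i => w i ≠ v i) := Finset.mem_filter.mpr ⟨hi, hne⟩
          rw [Finset.card_eq_zero.mp ha] at this
          exact absurd this (Finset.notMem_empty i)
        have : w = v' := by
          funext i
          rw [hv']
          by_cases hsi : s i ≠ 0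
          · have hiT : i ∈ T := by rw [hT, Finset.mem_filter]; exact ⟨Finset.mem_univ i, hsi⟩
            have h1 : w i = v i := hTempty i hiT
            have h2 : s i = 1 := by
              rcases zmod2cases (s i) with h | h
              · exact absurd h hsi
              · exact h
            show w i = v i + (u i + s i)
            rw [h2, h1]
            show v i = v i + (1 + 1)
            rw [show (1 : ZMod 2) + 1 = 0 by decide, add_zero]
          · have hiTc : i ∈ Tc := by rw [hTc, Finset.mem_filter]; exact ⟨Finset.mem_univ i, hsi⟩
            have h1 : w i ≠ v i := by
              have : i ∈ (Tc.filter fun i => w i ≠ v i) := by rw [hTcfull]; exact hiTc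
              exact (Finset.mem_filter.mp this).2
            have hsz : s i = 0 := not_not.mp hsi
            show w i = v i + (u i + s i)
            rw [hsz, add_zero]
            show w i = v i + 1
            exact znne _ _ h1
        simp [this]
      have hsupfib : ({v, v'} : Finset _) ⊆ (C.filter fun w => π w = π v) := by
        intro w hw
        rw [Finset.mem_insert, Finset.mem_singleton] at hw
        rcases hw with rfl | rfl
        · exact Finset.mem_filter.mpr ⟨hv, rfl⟩
        · exact Finset.mem_filter.mpr ⟨hv'C, hπus v⟩
      have : (C.filter fun w => π w = π v) = {v, v'} :=
        Finset.Subset.antisymm hsubfib hsupfib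
      rw [this, Finset.card_insert_of_notMem (by simpa using hvv'), Finset.card_singleton]
    have hmaps : ∀ v ∈ C, π v ∈ P := by
      intro v hv
      rw [hP]
      exact Finset.mem_image_of_mem _ hv
    have hsum : C.card = ∑ x ∈ P, (C.filter fun v => π v = x).card :=
      Finset.card_eq_sum_card_fiberwise hmaps
    rw [Finset.sum_congr rfl hfib, Finset.sum_const, smul_eq_mul] at hsum
    rw [hcard] at hsum
    omega
  · -- complement closure
    intro x hx
    rw [hP, Finset.mem_image] at hx
    obtain ⟨v, hv, rfl⟩ := hx
    rw [hP]
    rw [← hπs]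
    exact Finset.mem_image_of_mem _ (scl _ hv)
  · -- distances
    intro x hx y hy hxy hxy1
    rw [hP, Finset.mem_image] at hx hy
    obtain ⟨v, hv, rfl⟩ := hx
    obtain ⟨w, hw, rfl⟩ := hy
    have hvw : v ≠ w := by rintro rfl; exact hxy rfl
    have hvwu : v ≠ w + u := by
      rintro rfl
      exact hxy1 (hπu w)
    have d1 : hammingDist v w = 2*n := hdist _ hv _ hw hvw hvwu
    have hvsw : v + s ≠ w := by
      intro h
      apply hxy1
      have : π (v + s) = π w := by rw [h]
      rw [hπs] at this
      rw [← this, hadd11]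
    have hvswu : v + s ≠ w + u := by
      intro h
      apply hxy
      have : π (v + s) = π (w + u) := by rw [h]
      rw [hπs, hπu] at this
      have h2 := congrArg (fun z => z + (fun _ => (1 : ZMod 2))) this
      simp only at h2
      rw [hadd11, hadd11] at h2
      exact h2
    have d2 : hammingDist (v + s) w = 2*n := hdist _ (scl _ hv) _ hw hvsw hvswu
    have e1 := hsplit v w
    have e2 := hsplit (v + s) w
    rw [hNc] at e2
    have e3 := hflip v w
    rw [hπdist]
    omega
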